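/- Let G' = (V', E') be a d-regular graph with n vertices and m edges (so 2m = n·d), and suppose K ⊆ V' is a clique of size q. In the bipartite gadget graph G (with a biclique A_u × B_u of sizes λ_1 × λ_2 per vertex u, and an extra vertex b_e per edge e connected to one vertex of A_u for each endpoint u of e), the set J consisting of A_u for all u ∈ K, B_u for all u ∉ K, and b_e for all edges e with at least one endpoint outside K, is a vertex cover of G with |J ∩ A| = λ_1·q and |J| = λ_1·q + λ_2·(n − q) + m − q(q−1)/2. -/

import Mathlib

/-- Adjacency of the SVCB gadget graph: for each vertex `u` of the original
graph, a biclique between `A_u := {u} × Fin l1` and `B_u := {u} × Fin l2`;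
for each edge `e`, a vertex `b_e` joined, for each endpoint `u` of `e`, to the
single vertex `(u, att e u)` of `A_u`. -/
def gadgetAdj {V : Type*} (l1 l2 : ℕ) (E : Set (Sym2 V)) (att : Sym2 V → V → Fin l1) :
    ((V × Fin l1) ⊕ (V × Fin l2) ⊕ E) → ((V × Fin l1) ⊕ (V × Fin l2) ⊕ E) → Prop
  | .inl (u, _), .inr (.inl (v, _)) => u = v
  | .inr (.inl (v, _)), .inl (u, _) => u = v
  | .inl (u, i), .inr (.inr e) => u ∈ (e : Sym2 V) ∧ i = att e u
  | .inr (.inr e), .inl (u, i) => u ∈ (e : Sym2 V) ∧ i = att e u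
  | _, _ => False

theorem stmt_8 {V : Type*} [Fintype V] [DecidableEq V]
    (G' : SimpleGraph V) [DecidableRel G'.Adj]
    (d n m q l1 l2 : ℕ)
    (hn : Fintype.card V = n) (hm : G'.edgeSet.ncard = m)
    (hreg : G'.IsRegularOfDegree d) (hnd : 2 * m = n * d)
    (K : Finset V) (hclique : G'.IsClique ↑K) (hq : K.card = q)
    (att : Sym2 V → V → Fin l1) :
    let J : Set ((V × Fin l1) ⊕ (V × Fin l2) ⊕ G'.edgeSet) :=
      {w | Sum.elim (fun p : V × Fin l1 => p.1 ∈ K)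
            (Sum.elim (fun p : V × Fin l2 => p.1 ∉ K)
              (fun e : G'.edgeSet => ∃ v, v ∈ (e : Sym2 V) ∧ v ∉ K)) w}
    (∀ w w', gadgetAdj l1 l2 G'.edgeSet att w w' → w ∈ J ∨ w' ∈ J) ∧
    {w ∈ J | ∃ u i, w = Sum.inl (u, i)}.ncard = l1 * q ∧
    J.ncard = l1 * q + l2 * (n - q) + (m - q * (q - 1) / 2) := by
  intro J
  -- the three pieces
  set S1 : Set ((V × Fin l1) ⊕ (V × Fin l2) ⊕ G'.edgeSet) :=
    Sum.inl '' ↑(K ×ˢ (Finset.univ : Finset (Fin l1))) with hS1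
  set S2 : Set ((V × Fin l1) ⊕ (V × Fin l2) ⊕ G'.edgeSet) :=
    (Sum.inr ∘ Sum.inl) '' ↑(Kᶜ ×ˢ (Finset.univ : Finset (Fin l2))) with hS2
  set T3 : Set G'.edgeSet := {e : G'.edgeSet | ∃ v, v ∈ (e : Sym2 V) ∧ v ∉ K} with hT3
  set S3 : Set ((V × Fin l1) ⊕ (V × Fin l2) ⊕ G'.edgeSet) :=
    (Sum.inr ∘ Sum.inr) '' T3 with hS3
  have hJdecomp : J = S1 ∪ S2 ∪ S3 := by
    ext w
    rcases w with ⟨u, i⟩ | ⟨⟨v, j⟩ | e⟩ <;>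
      simp [J, S1, S2, S3, T3, Set.mem_image]
  have hncard1 : S1.ncard = l1 * q := by
    rw [hS1, Set.ncard_image_of_injective _ Sum.inl_injective, Set.ncard_coe_finset,
      Finset.card_product, Finset.card_univ, Fintype.card_fin, hq, mul_comm]
  have hncard2 : S2.ncard = l2 * (n - q) := by
    rw [hS2, Set.ncard_image_of_injective _ (Sum.inr_injective.comp Sum.inl_injective),
      Set.ncard_coe_finset, Finset.card_product, Finset.card_univ, Fintype.card_fin,
      Finset.card_compl, hq, hn, mul_comm]
  -- edges fully inside K
  have hinside : (Subtype.val '' T3ᶜ : Set (Sym2 V)) = ↑(K.offDiag.image Sym2.mk.uncurry) := by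
    ext s
    simp only [Set.mem_image, Set.mem_compl_iff, hT3, Set.mem_setOf_eq, Finset.coe_image,
      Finset.mem_coe, Finset.mem_offDiag, Set.mem_image]
    constructor
    · rintro ⟨⟨s, hs⟩, hP, rfl⟩
      push_neg at hP
      induction s with
      | _ a b =>
        exact ⟨(a, b), ⟨hP a (Sym2.mem_mk_left a b), hP b (Sym2.mem_mk_right a b),
          (G'.ne_of_adj (G'.mem_edgeSet.mp hs))⟩, rfl⟩
    · rintro ⟨⟨a, b⟩, ⟨ha, hb, hab⟩, rfl⟩
      refine ⟨⟨s(a, b), G'.mem_edgeSet.mpr (hclique ha hb hab)⟩, ?_, rfl⟩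
      push_neg
      intro v hv
      rcases Sym2.mem_iff.mp hv with rfl | rfl <;> assumption
  have hcompl : (T3ᶜ : Set G'.edgeSet).ncard = q * (q - 1) / 2 := by
    rw [← Set.ncard_image_of_injective _ Subtype.val_injective, hinside,
      Set.ncard_coe_finset, Sym2.card_image_offDiag, hq, Nat.choose_two_right]
  have hmcard : Nat.card G'.edgeSet = m := by
    rw [← hm, Nat.card_coe_set_eq]
  have hT3card : T3.ncard = m - q * (q - 1) / 2 := by
    have := Set.ncard_add_ncard_compl T3
    rw [hcompl, hmcard] at this
    omega
  have hncard3 : S3.ncard = m - q * (q - 1) / 2 := by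
    rw [hS3, Set.ncard_image_of_injective _ (Sum.inr_injective.comp Sum.inr_injective), hT3card]
  refine ⟨?_, ?_, ?_⟩
  · intro w w' h
    rcases w with ⟨u, i⟩ | ⟨⟨v, j⟩ | e⟩ <;> rcases w' with ⟨u', i'⟩ | ⟨⟨v', j'⟩ | e'⟩ <;>
        simp only [gadgetAdj] at h
    · subst h
      by_cases hu : u ∈ K
      · exact Or.inl hu
      · exact Or.inr hu
    · by_cases hu : u ∈ K
      · exact Or.inl hu
      · exact Or.inr ⟨u, h.1, hu⟩
    · subst h
      by_cases hv : u' ∈ K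
      · exact Or.inr hv
      · exact Or.inl hv
    · by_cases hu : u' ∈ K
      · exact Or.inr hu
      · exact Or.inl ⟨u', h.1, hu⟩
  · have : {w ∈ J | ∃ u i, w = Sum.inl (u, i)} = S1 := by
      ext w
      rcases w with ⟨u, i⟩ | ⟨⟨v, j⟩ | e⟩ <;>
        simp [J, S1, Set.mem_image]
    rw [this, hncard1]
  · have hd12 : Disjoint S1 S2 := by
      rw [Set.disjoint_left]
      rintro w ⟨p, _, rfl⟩ ⟨p', _, h⟩
      simp at h
    have hd3 : Disjoint (S1 ∪ S2) S3 := by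
      rw [Set.disjoint_left]
      rintro w hw ⟨e, _, rfl⟩
      rcases hw with ⟨p, _, h⟩ | ⟨p, _, h⟩ <;> simp at h
    rw [hJdecomp, Set.ncard_union_eq hd3 ((S1.toFinite.union S2.toFinite)) S3.toFinite,
      Set.ncard_union_eq hd12 S1.toFinite S2.toFinite, hncard1, hncard2, hncard3]
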